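/- Fix a natural number n ≥ 1 and let M = 2n+1. For Lebesgue-almost every pair of vectors (λ, κ) ∈ ℝ^M × ℝ^M, the M × M real matrix S whose l-th row is (1, λ_l, λ_l², …, λ_l^n, κ_l, κ_l λ_l, …, κ_l λ_l^{n-1}) is invertible (equivalently, det S ≠ 0 for almost every (λ, κ)). -/

import Mathlib

open MeasureTheory Matrix

lemma measurable_mvpoly_eval {σ : Type*} [MeasurableSpace σ] (p : MvPolynomial σ ℝ) :
    Measurable fun x : σ → ℝ => MvPolynomial.eval x p := by
  induction p using MvPolynomial.induction_on with
  | C a => simpa using measurable_const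
  | add p q hp hq => simp; exact hp.add hq
  | mul_X p i hp => simp; exact hp.mul (measurable_pi_apply i)

lemma mvpoly_ae_ne_zero : ∀ (m : ℕ) (p : MvPolynomial (Fin m) ℝ), p ≠ 0 →
    ∀ᵐ x : Fin m → ℝ ∂volume, MvPolynomial.eval x p ≠ 0 := by
  intro m
  induction m with
  | zero =>
    intro p hp
    obtain ⟨a, rfl⟩ := MvPolynomial.C_surjective (Fin 0) p
    filter_upwards with x
    simpa using fun h => hp (by simp [h])
  | succ m ih =>
    intro p hp
    set q := MvPolynomial.finSuccEquiv ℝ m p with hq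
    have hq0 : q ≠ 0 := by
      intro h
      apply hp
      have := congrArg (MvPolynomial.finSuccEquiv ℝ m).symm h
      simpa [hq] using this
    -- a.e. s, the mapped polynomial is nonzero
    have key : ∀ᵐ s : Fin m → ℝ ∂volume, q.map (MvPolynomial.eval s) ≠ 0 := by
      have hlc : q.coeff q.natDegree ≠ 0 := Polynomial.leadingCoeff_ne_zero.2 hq0
      filter_upwards [ih _ hlc] with s hs hcon
      apply hs
      have := congrArg (fun r => Polynomial.coeff r q.natDegree) hcon
      simpa [Polynomial.coeff_map] using this
    -- measurability
    have hconsm : Measurable fun sy : (Fin m → ℝ) × ℝ => (Fin.cons sy.2 sy.1 : Fin (m+1) → ℝ) := by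
      rw [measurable_pi_iff]
      intro i
      refine Fin.cases ?_ ?_ i
      · simpa using measurable_snd
      · intro j
        simp; exact (measurable_pi_apply j).comp measurable_fst
    have hWm : MeasurableSet {sy : (Fin m → ℝ) × ℝ |
        Polynomial.eval sy.2 (q.map (MvPolynomial.eval sy.1)) = 0} := by
      have : {sy : (Fin m → ℝ) × ℝ |
          Polynomial.eval sy.2 (q.map (MvPolynomial.eval sy.1)) = 0}
          = (fun sy : (Fin m → ℝ) × ℝ => MvPolynomial.eval (Fin.cons sy.2 sy.1) p) ⁻¹' {0} := by
        ext sy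
        simp [MvPolynomial.eval_eq_eval_mv_eval', hq]
      rw [this]
      exact ((measurable_mvpoly_eval p).comp hconsm) (measurableSet_singleton 0)
    -- the zero set
    rw [MeasureTheory.ae_iff]
    have hset : {x : Fin (m+1) → ℝ | ¬ MvPolynomial.eval x p ≠ 0}
        = (MeasurableEquiv.piFinSuccAbove (fun _ : Fin (m+1) => ℝ) 0) ⁻¹'
          (Prod.swap ⁻¹' {sy : (Fin m → ℝ) × ℝ |
            Polynomial.eval sy.2 (q.map (MvPolynomial.eval sy.1)) = 0}) := by
      ext x
      have hx : x = Fin.cons (x 0) (fun j => x ((0 : Fin (m+1)).succAbove j)) := by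
        funext i
        refine Fin.cases ?_ ?_ i
        · simp
        · intro j; simp [Fin.zero_succAbove]
      simp only [Set.mem_preimage, Set.mem_setOf_eq, not_not]
      constructor
      · intro h
        rw [hx] at h
        rw [MvPolynomial.eval_eq_eval_mv_eval'] at h
        simp [MeasurableEquiv.piFinSuccAbove, hq, Fin.zero_succAbove] at h ⊢; exact h
      · intro h
        rw [hx, MvPolynomial.eval_eq_eval_mv_eval']
        simp [MeasurableEquiv.piFinSuccAbove, hq, Fin.zero_succAbove] at h ⊢; exact h
    rw [hset]
    rw [(volume_preserving_piFinSuccAbove (fun _ : Fin (m+1) => ℝ) 0).measure_preimage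
      ((hWm.preimage measurable_swap)).nullMeasurableSet]
    have hswap : MeasurePreserving (Prod.swap : ℝ × (Fin m → ℝ) → (Fin m → ℝ) × ℝ)
        volume volume := by
      rw [MeasureTheory.Measure.volume_eq_prod _ _, MeasureTheory.Measure.volume_eq_prod _ _]
      exact Measure.measurePreserving_swap
    rw [hswap.measure_preimage hWm.nullMeasurableSet]
    rw [MeasureTheory.Measure.volume_eq_prod _ _, Measure.measure_prod_null hWm]
    filter_upwards [key] with s hs
    have : (Prod.mk s ⁻¹' {sy : (Fin m → ℝ) × ℝ |
        Polynomial.eval sy.2 (q.map (MvPolynomial.eval sy.1)) = 0})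
        = {y : ℝ | (q.map (MvPolynomial.eval s)).IsRoot y} := rfl
    rw [this]
    exact (Polynomial.finite_setOf_isRoot hs).measure_zero volume

/-- For `n ≥ 1` and `M = 2n+1`, for Lebesgue-almost every pair of vectors
`(λ, κ) ∈ ℝ^M × ℝ^M`, the `M × M` matrix whose `l`-th row is
`(1, λ_l, …, λ_l^n, κ_l, κ_l λ_l, …, κ_l λ_l^{n-1})` has nonzero determinant. -/
theorem stmt_0 (n : ℕ) (hn : 1 ≤ n) :
    ∀ᵐ p : (Fin (2*n+1) → ℝ) × (Fin (2*n+1) → ℝ) ∂volume,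
      (Matrix.of (fun l r : Fin (2*n+1) =>
        if (r : ℕ) ≤ n then p.1 l ^ (r : ℕ)
        else p.2 l * p.1 l ^ ((r : ℕ) - (n+1)))).det ≠ 0 := by

  classical
  set M := 2*n+1 with hM
  set P : MvPolynomial (Fin M ⊕ Fin M) ℝ :=
    (Matrix.of (fun l r : Fin M =>
      if (r : ℕ) ≤ n then (MvPolynomial.X (Sum.inl l) : MvPolynomial (Fin M ⊕ Fin M) ℝ) ^ (r:ℕ)
      else MvPolynomial.X (Sum.inr l) * MvPolynomial.X (Sum.inl l) ^ ((r:ℕ) - (n+1)))).det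
    with hPdef
  have hEval : ∀ w : Fin M ⊕ Fin M → ℝ,
      MvPolynomial.eval w P =
      (Matrix.of (fun l r : Fin M =>
        if (r:ℕ) ≤ n then w (Sum.inl l) ^ (r:ℕ)
        else w (Sum.inr l) * w (Sum.inl l) ^ ((r:ℕ)-(n+1)))).det := by
    intro w
    rw [hPdef, RingHom.map_det]
    congr 1
    ext l r
    by_cases h : (r:ℕ) ≤ n <;> simp [h, Matrix.map_apply]
  -- P is nonzero: evaluate at a Vandermonde point
  have hP0 : P ≠ 0 := by
    intro h
    have hv : MvPolynomial.eval
        (Sum.elim (fun l : Fin M => (l:ℝ)) (fun l : Fin M => (l:ℝ)^(n+1))) P ≠ 0 := by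
      rw [hEval]
      have : (Matrix.of (fun l r : Fin M =>
          if (r:ℕ) ≤ n then (Sum.elim (fun l : Fin M => (l:ℝ)) (fun l : Fin M => (l:ℝ)^(n+1)))
            (Sum.inl l) ^ (r:ℕ)
          else (Sum.elim (fun l : Fin M => (l:ℝ)) (fun l : Fin M => (l:ℝ)^(n+1))) (Sum.inr l) *
            (Sum.elim (fun l : Fin M => (l:ℝ)) (fun l : Fin M => (l:ℝ)^(n+1))) (Sum.inl l)
              ^ ((r:ℕ)-(n+1))))
          = Matrix.vandermonde (fun l : Fin M => (l:ℝ)) := by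
        ext l r
        by_cases h : (r:ℕ) ≤ n
        · simp [Matrix.vandermonde, h]
        · have h1 : n+1 ≤ (r:ℕ) := Nat.succ_le_of_lt (Nat.lt_of_not_le h)
          simp only [Matrix.of_apply, Sum.elim_inl, Sum.elim_inr, if_neg h, Matrix.vandermonde]
          rw [← pow_add, Nat.add_sub_cancel' h1]
      rw [this]
      rw [Matrix.det_vandermonde_ne_zero_iff]
      exact fun a b hab => Fin.val_injective (Nat.cast_injective hab)
    rw [h] at hv
    simp at hv
  -- rename to a Fin type
  set p2 : MvPolynomial (Fin (M+M)) ℝ := MvPolynomial.rename finSumFinEquiv P with hp2def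
  have hp20 : p2 ≠ 0 := by
    intro h
    exact hP0 (MvPolynomial.rename_injective _ finSumFinEquiv.injective (by simpa [hp2def] using h))
  have hae := mvpoly_ae_ne_zero (M+M) p2 hp20
  -- the measure preserving map
  set g1 : (Fin (M+M) → ℝ) ≃ᵐ ((Fin M ⊕ Fin M) → ℝ) :=
    MeasurableEquiv.piCongrLeft (fun _ => ℝ) finSumFinEquiv.symm with hg1
  set g2 : ((Fin M ⊕ Fin M) → ℝ) ≃ᵐ (Fin M → ℝ) × (Fin M → ℝ) :=
    MeasurableEquiv.sumPiEquivProdPi (fun _ => ℝ) with hg2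
  have hF : MeasurePreserving (fun x => g2 (g1 x)) volume volume :=
    (volume_measurePreserving_sumPiEquivProdPi _).comp
      (volume_measurePreserving_piCongrLeft _ _)
  -- measurability of the target set
  have helim : Measurable fun pr : (Fin M → ℝ) × (Fin M → ℝ) =>
      (Sum.elim pr.1 pr.2 : Fin M ⊕ Fin M → ℝ) := by
    rw [measurable_pi_iff]
    rintro (i | i)
    · exact (measurable_pi_apply i).comp measurable_fst
    · exact (measurable_pi_apply i).comp measurable_snd
  have hdet : ∀ pr : (Fin M → ℝ) × (Fin M → ℝ),
      (Matrix.of (fun l r : Fin M =>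
        if (r : ℕ) ≤ n then pr.1 l ^ (r : ℕ)
        else pr.2 l * pr.1 l ^ ((r : ℕ) - (n+1)))).det
      = MvPolynomial.eval (Sum.elim pr.1 pr.2) P := by
    intro pr
    rw [hEval]
    rfl
  have hQmeas : MeasurableSet {pr : (Fin M → ℝ) × (Fin M → ℝ) |
      (Matrix.of (fun l r : Fin M =>
        if (r : ℕ) ≤ n then pr.1 l ^ (r : ℕ)
        else pr.2 l * pr.1 l ^ ((r : ℕ) - (n+1)))).det ≠ 0} := by
    have : {pr : (Fin M → ℝ) × (Fin M → ℝ) |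
        (Matrix.of (fun l r : Fin M =>
          if (r : ℕ) ≤ n then pr.1 l ^ (r : ℕ)
          else pr.2 l * pr.1 l ^ ((r : ℕ) - (n+1)))).det ≠ 0}
        = ((fun pr : (Fin M → ℝ) × (Fin M → ℝ) =>
            MvPolynomial.eval (Sum.elim pr.1 pr.2) P) ⁻¹' {0})ᶜ := by
      ext pr
      simp [hdet pr]
    rw [this]
    exact (((measurable_mvpoly_eval P).comp helim) (measurableSet_singleton 0)).compl
  rw [← hF.map_eq, MeasureTheory.ae_map_iff hF.measurable.aemeasurable hQmeas]
  filter_upwards [hae] with x hx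
  show (Matrix.of (fun l r : Fin M =>
      if (r : ℕ) ≤ n then (g2 (g1 x)).1 l ^ (r : ℕ)
      else (g2 (g1 x)).2 l * (g2 (g1 x)).1 l ^ ((r : ℕ) - (n+1)))).det ≠ 0
  rw [hdet]
  have h1 : (Sum.elim (g2 (g1 x)).1 (g2 (g1 x)).2 : Fin M ⊕ Fin M → ℝ) = g1 x := by
    funext i
    cases i <;> rfl
  rw [h1]
  have h2 : (g1 x : Fin M ⊕ Fin M → ℝ) = fun i => x (finSumFinEquiv i) := by
    funext i
    have := MeasurableEquiv.piCongrLeft_apply_apply (finSumFinEquiv.symm)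
      (β := fun _ : Fin M ⊕ Fin M => ℝ) x (finSumFinEquiv i)
    simpa [hg1] using this
  rw [h2]
  have h3 : MvPolynomial.eval (fun i => x (finSumFinEquiv i)) P = MvPolynomial.eval x p2 := by
    rw [hp2def, MvPolynomial.eval_rename]
    rfl
  rw [h3]
  exact hx
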